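/- Let a < b be real, U ⊆ ℂ open with [a,b] ⊂ U, and ν holomorphic on U. Set α(λ) = exp(∫_a^b ν(μ)/(μ−λ) dμ) and L(λ) = ∫_a^b 1/(μ−λ) dμ for λ ∈ ℂ∖[a,b]. Then for each endpoint ς ∈ {a,b} there exist constants C ≥ 1 and δ > 0 such that for all λ ∉ [a,b] with 0 < |λ − ς| < δ one has C⁻¹ ≤ | α(λ) · exp(−ν(ς)·L(λ)) | ≤ C. (Here L(λ) is a holomorphic branch of log((λ−b)/(λ−a)) on ℂ∖[a,b], so this says α(λ) behaves like w(λ)^{ν(ς)} with w(λ) = (λ−b)/(λ−a) near ς.) -/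

import Mathlib

open Complex Set MeasureTheory intervalIntegral Metric

lemma norm_clog_le (z : ℂ) : ‖Complex.log z‖ ≤ |Real.log ‖z‖| + Real.pi := by
  calc ‖Complex.log z‖ ≤ |(Complex.log z).re| + |(Complex.log z).im| :=
        Complex.norm_le_abs_re_add_abs_im _
  _ ≤ |Real.log ‖z‖| + Real.pi := by
      rw [Complex.log_re, Complex.log_im]
      exact add_le_add_right (Complex.abs_arg_le_pi z) _

lemma L_bound (a b : ℝ) (hab : a ≤ b) (lam : ℂ)
    (h : lam ∉ (fun x : ℝ => (x : ℂ)) '' Set.Icc a b) :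
    ‖∫ μ in a..b, 1 / ((μ : ℂ) - lam)‖ ≤
      |Real.log ‖(b : ℂ) - lam‖| + |Real.log ‖(a : ℂ) - lam‖| + 2 * Real.pi := by
  have hne : ∀ μ ∈ Set.Icc a b, (μ : ℂ) ≠ lam := by
    intro μ hμ he
    exact h ⟨μ, hμ, he⟩
  have hcont : ContinuousOn (fun μ : ℝ => 1 / ((μ : ℂ) - lam)) (Set.uIcc a b) := by
    rw [Set.uIcc_of_le hab]
    apply ContinuousOn.div continuousOn_const
    · exact (Complex.continuous_ofReal.continuousOn).sub continuousOn_const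
    · intro μ hμ
      exact sub_ne_zero.mpr (hne μ hμ)
  have hint : IntervalIntegrable (fun μ : ℝ => 1 / ((μ : ℂ) - lam)) volume a b :=
    hcont.intervalIntegrable
  have branch1 : (∀ μ ∈ Set.Icc a b, ((μ : ℂ) - lam) ∈ Complex.slitPlane) →
      (∫ μ in a..b, 1 / ((μ : ℂ) - lam)) =
        Complex.log ((b : ℂ) - lam) - Complex.log ((a : ℂ) - lam) := by
    intro hs
    apply intervalIntegral.integral_eq_sub_of_hasDerivAt _ hint
    intro μ hμ
    rw [Set.uIcc_of_le hab] at hμ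
    have h1 : HasDerivAt (fun z : ℂ => Complex.log (z - lam)) (1 / ((μ:ℂ) - lam)) (μ:ℂ) :=
      ((hasDerivAt_id ((μ:ℂ))).sub_const lam).clog (hs μ hμ)
    exact h1.comp_ofReal
  have branch2 : (∀ μ ∈ Set.Icc a b, (lam - (μ : ℂ)) ∈ Complex.slitPlane) →
      (∫ μ in a..b, 1 / ((μ : ℂ) - lam)) =
        Complex.log (lam - (b : ℂ)) - Complex.log (lam - (a : ℂ)) := by
    intro hs
    apply intervalIntegral.integral_eq_sub_of_hasDerivAt _ hint
    intro μ hμ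
    rw [Set.uIcc_of_le hab] at hμ
    have h1 : HasDerivAt (fun z : ℂ => Complex.log (lam - z)) ((-1) / (lam - (μ:ℂ))) (μ:ℂ) :=
      ((hasDerivAt_id ((μ:ℂ))).const_sub lam).clog (hs μ hμ)
    have hμne : ((μ:ℂ) - lam) ≠ 0 := sub_ne_zero.mpr (hne μ hμ)
    have hμne' : (lam - (μ:ℂ)) ≠ 0 := fun he => hμne (by rw [← neg_sub] at he; simpa using neg_eq_zero.mp he)
    have heq : (-1 : ℂ) / (lam - (μ:ℂ)) = 1 / ((μ:ℂ) - lam) := by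
      rw [div_eq_div_iff hμne' hμne]; ring
    rw [heq] at h1
    exact h1.comp_ofReal
  have key : ‖∫ μ in a..b, 1 / ((μ : ℂ) - lam)‖ ≤
      (|Real.log ‖(b : ℂ) - lam‖| + Real.pi) + (|Real.log ‖(a : ℂ) - lam‖| + Real.pi) := by
    by_cases him : lam.im = 0
    · have hre : ¬ (a ≤ lam.re ∧ lam.re ≤ b) := by
        intro ⟨h1, h2⟩
        exact h ⟨lam.re, ⟨h1, h2⟩, by apply Complex.ext <;> simp [him]⟩
      rcases not_and_or.mp hre with h1 | h2
      · push_neg at h1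
        rw [branch1 (fun μ hμ => Complex.mem_slitPlane_iff.mpr (Or.inl (by
            simp only [Complex.sub_re, Complex.ofReal_re]
            linarith [hμ.1])))]
        exact (norm_sub_le _ _).trans (add_le_add (norm_clog_le _) (norm_clog_le _))
      · push_neg at h2
        rw [branch2 (fun μ hμ => Complex.mem_slitPlane_iff.mpr (Or.inl (by
            simp only [Complex.sub_re, Complex.ofReal_re]
            linarith [hμ.2])))]
        rw [show ‖(b:ℂ) - lam‖ = ‖lam - (b:ℂ)‖ from norm_sub_rev _ _,
            show ‖(a:ℂ) - lam‖ = ‖lam - (a:ℂ)‖ from norm_sub_rev _ _]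
        exact (norm_sub_le _ _).trans (add_le_add (norm_clog_le _) (norm_clog_le _))
    · rw [branch1 (fun μ hμ => Complex.mem_slitPlane_iff.mpr (Or.inr (by
          simp only [Complex.sub_im, Complex.ofReal_im]
          simpa using him)))]
      exact (norm_sub_le _ _).trans (add_le_add (norm_clog_le _) (norm_clog_le _))
  linarith [key]
/-- near an endpoint `ς ∈ {a,b}` the function
`α(λ) = exp(∫_a^b ν(μ)/(μ-λ) dμ)` behaves like `w(λ)^{ν(ς)}` with
`w(λ) = (λ-b)/(λ-a)`: with `L(λ) = ∫_a^b dμ/(μ-λ)` (a branch of `log w`),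
the quantity `|α(λ) exp(-ν(ς) L(λ))|` is bounded above and below near `ς`. -/
theorem stmt10 (a b : ℝ) (hab : a < b) (U : Set ℂ) (hU : IsOpen U)
    (hUab : (fun x : ℝ => (x : ℂ)) '' Set.Icc a b ⊆ U)
    (ν : ℂ → ℂ) (hν : DifferentiableOn ℂ ν U)
    (α : ℂ → ℂ) (hα : ∀ lam : ℂ, α lam = Complex.exp (∫ μ in a..b, ν μ / (μ - lam)))
    (L : ℂ → ℂ) (hL : ∀ lam : ℂ, L lam = ∫ μ in a..b, 1 / ((μ : ℂ) - lam))
    (ς : ℝ) (hς : ς = a ∨ ς = b) :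
    ∃ C ≥ (1 : ℝ), ∃ δ > (0 : ℝ),
      ∀ lam : ℂ, lam ∉ (fun x : ℝ => (x : ℂ)) '' Set.Icc a b →
        0 < ‖lam - (ς : ℂ)‖ → ‖lam - (ς : ℂ)‖ < δ →
          C⁻¹ ≤ ‖α lam * Complex.exp (-(ν (ς : ℂ)) * L lam)‖ ∧
          ‖α lam * Complex.exp (-(ν (ς : ℂ)) * L lam)‖ ≤ C := by
  have hab' : a ≤ b := hab.le
  set S : Set ℂ := (fun x : ℝ => (x : ℂ)) '' Set.Icc a b with hSdef
  have hS_compact : IsCompact S := isCompact_Icc.image Complex.continuous_ofReal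
  have hS_convex : Convex ℝ S := by
    rintro x ⟨p, hp, rfl⟩ y ⟨q, hq, rfl⟩ s t hs ht hst
    exact ⟨s * p + t * q, (convex_Icc a b) hp hq hs ht hst, by
      rw [Complex.real_smul, Complex.real_smul]; push_cast; ring⟩
  obtain ⟨ε, hε0, hεU⟩ := hS_compact.exists_cthickening_subset_open hU hUab
  set V := Metric.cthickening ε S with hVdef
  have hV_compact : IsCompact V := hS_compact.cthickening
  have hV_convex : Convex ℝ V := hS_convex.cthickening ε
  have hSV : S ⊆ V := Metric.self_subset_cthickening S
  have hν' : ContinuousOn (deriv ν) U := ((hν.analyticOnNhd hU).deriv).continuousOn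
  obtain ⟨M0, hM0⟩ := hV_compact.exists_bound_of_continuousOn (hν'.mono hεU)
  set M := max M0 0 with hMdef
  have hMnn : 0 ≤ M := le_max_right _ _
  have hlip : ∀ x ∈ V, ∀ y ∈ V, ‖ν y - ν x‖ ≤ M * ‖y - x‖ := by
    intro x hx y hy
    exact hV_convex.norm_image_sub_le_of_norm_hasDerivWithin_le
      (f' := deriv ν)
      (fun z hz => ((hν.differentiableAt (hU.mem_nhds (hεU hz))).hasDerivAt).hasDerivWithinAt)
      (fun z hz => le_trans (hM0 z hz) (le_max_left _ _)) hx hy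
  set C1 := max |Real.log ((b - a) / 2)| |Real.log (b - a + 1)| with hC1def
  have hC1nn : 0 ≤ C1 := le_trans (abs_nonneg _) (le_max_left _ _)
  have hpi : (0:ℝ) < Real.pi := Real.pi_pos
  set B := M * (b - a) + M * (1 + C1 + 2 * Real.pi) with hBdef
  have hBnn : 0 ≤ B := by
    apply add_nonneg (mul_nonneg hMnn (by linarith)) (mul_nonneg hMnn (by linarith))
  refine ⟨Real.exp B, Real.one_le_exp hBnn, min ε (min 1 ((b - a) / 2)),
    lt_min hε0 (lt_min one_pos (by linarith)), ?_⟩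
  intro lam hlam hr0 hrδ
  set r := ‖lam - (ς : ℂ)‖ with hrdef
  have hrε : r < ε := lt_of_lt_of_le hrδ (min_le_left _ _)
  have hr1 : r < 1 := lt_of_lt_of_le hrδ ((min_le_right _ _).trans (min_le_left _ _))
  have hrba : r < (b - a) / 2 := lt_of_lt_of_le hrδ ((min_le_right _ _).trans (min_le_right _ _))
  have hςab : ς ∈ Set.Icc a b := by
    rcases hς with h | h <;> subst h <;> simp [hab.le]
  have hςS : (ς : ℂ) ∈ S := ⟨ς, hςab, rfl⟩
  have hlamV : lam ∈ V := Metric.closedBall_subset_cthickening hςS ε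
    (by rw [Metric.mem_closedBall, dist_eq_norm]; exact hrε.le)
  have hne : ∀ μ ∈ Set.Icc a b, (μ : ℂ) ≠ lam := fun μ hμ he => hlam ⟨μ, hμ, he⟩
  have hne' : ∀ μ ∈ Set.uIcc a b, ((μ : ℂ) - lam) ≠ 0 := by
    intro μ hμ
    exact sub_ne_zero.mpr (hne μ (by rwa [Set.uIcc_of_le hab'] at hμ))
  have hconte : ContinuousOn (fun μ : ℝ => 1 / ((μ : ℂ) - lam)) (Set.uIcc a b) :=
    ContinuousOn.div continuousOn_const
      ((Complex.continuous_ofReal.continuousOn).sub continuousOn_const) hne'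
  have hcontν : ContinuousOn (fun μ : ℝ => ν (μ : ℂ)) (Set.uIcc a b) := by
    apply hν.continuousOn.comp Complex.continuous_ofReal.continuousOn
    intro μ hμ
    exact hUab ⟨μ, by rwa [Set.uIcc_of_le hab'] at hμ, rfl⟩
  have hint1 : IntervalIntegrable (fun μ : ℝ => (ν μ - ν lam) / ((μ : ℂ) - lam)) volume a b :=
    (ContinuousOn.div (hcontν.sub continuousOn_const)
      ((Complex.continuous_ofReal.continuousOn).sub continuousOn_const) hne').intervalIntegrable
  have hint2 : IntervalIntegrable (fun μ : ℝ => 1 / ((μ : ℂ) - lam)) volume a b :=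
    hconte.intervalIntegrable
  have key : (∫ μ in a..b, ν μ / ((μ : ℂ) - lam)) =
      (∫ μ in a..b, (ν μ - ν lam) / ((μ : ℂ) - lam))
        + ((ν lam - ν (ς : ℂ)) * L lam + ν (ς : ℂ) * L lam) := by
    rw [hL, ← intervalIntegral.integral_const_mul, ← intervalIntegral.integral_const_mul,
      ← intervalIntegral.integral_add (hint2.const_mul _) (hint2.const_mul _),
      ← intervalIntegral.integral_add hint1 ((hint2.const_mul _).add (hint2.const_mul _))]
    apply intervalIntegral.integral_congr
    intro μ hμ
    have hd := hne' μ hμ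
    field_simp
    try ring
  have main_eq : α lam * Complex.exp (-(ν (ς : ℂ)) * L lam)
      = Complex.exp ((∫ μ in a..b, (ν μ - ν lam) / ((μ : ℂ) - lam))
          + (ν lam - ν (ς : ℂ)) * L lam) := by
    rw [hα lam, ← Complex.exp_add]
    congr 1
    rw [key]
    ring
  have hμV : ∀ μ ∈ Set.Icc a b, (μ : ℂ) ∈ V := fun μ hμ => hSV ⟨μ, hμ, rfl⟩
  have h1 : ‖∫ μ in a..b, (ν μ - ν lam) / ((μ : ℂ) - lam)‖ ≤ M * (b - a) := by
    have hbd : ∀ μ ∈ Set.uIoc a b, ‖(ν μ - ν lam) / ((μ : ℂ) - lam)‖ ≤ M := by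
      intro μ hμ
      have hμ' : μ ∈ Set.Icc a b := Set.mem_Icc_of_Ioc (by rwa [Set.uIoc_of_le hab'] at hμ)
      have hd : ((μ : ℂ) - lam) ≠ 0 := sub_ne_zero.mpr (hne μ hμ')
      rw [norm_div, div_le_iff₀ (norm_pos_iff.mpr hd)]
      exact hlip lam hlamV ((μ : ℂ)) (hμV μ hμ')
    have hb := intervalIntegral.norm_integral_le_of_norm_le_const hbd
    rwa [_root_.abs_of_nonneg (by linarith : (0:ℝ) ≤ b - a)] at hb
  have h2 : ‖(ν lam - ν (ς : ℂ)) * L lam‖ ≤ M * (1 + C1 + 2 * Real.pi) := by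
    rw [norm_mul]
    have ha1 : ‖ν lam - ν (ς : ℂ)‖ ≤ M * r := hlip ((ς : ℂ)) (hSV hςS) lam hlamV
    have hLb : ‖L lam‖ ≤ |Real.log r| + C1 + 2 * Real.pi := by
      rw [hL]
      refine le_trans (L_bound a b hab' lam hlam) ?_
      have hbma : ‖((b : ℂ) - (a : ℂ))‖ = b - a := by
        rw [← Complex.ofReal_sub, Complex.norm_real]
        exact abs_of_nonneg (by linarith)
      have hC1s : ∀ s : ℝ, (b - a) / 2 ≤ s → s ≤ b - a + 1 → |Real.log s| ≤ C1 := by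
        intro s hs1 hs2
        have hspos : (0:ℝ) < (b - a) / 2 := by linarith
        rw [abs_le]
        constructor
        · have := Real.log_le_log hspos hs1
          have h3 : -|Real.log ((b - a) / 2)| ≤ Real.log ((b - a) / 2) := neg_abs_le _
          have h4 : -C1 ≤ -|Real.log ((b - a) / 2)| := neg_le_neg (le_max_left _ _)
          linarith
        · have := Real.log_le_log (lt_of_lt_of_le hspos hs1) hs2
          have h3 : Real.log (b - a + 1) ≤ |Real.log (b - a + 1)| := le_abs_self _
          have h4 : |Real.log (b - a + 1)| ≤ C1 := le_max_right _ _
          linarith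
      have htri1 := norm_sub_le_norm_sub_add_norm_sub ((b:ℂ)) lam ((a:ℂ))
      have htri2 := norm_sub_le_norm_sub_add_norm_sub ((b:ℂ)) ((a:ℂ)) lam
      have hbma' : ‖((a:ℂ) - (b:ℂ))‖ = b - a := by rw [norm_sub_rev]; exact hbma
      rcases hς with h | h
      · -- ς = a
        have har : ‖(a : ℂ) - lam‖ = r := by
          rw [norm_sub_rev, hrdef, h]
        have hla : ‖lam - (a:ℂ)‖ = r := by rw [hrdef, h]
        have hs1 : (b - a) / 2 ≤ ‖(b : ℂ) - lam‖ := by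
          rw [hbma] at htri1
          rw [hla] at htri1
          linarith
        have hs2 : ‖(b : ℂ) - lam‖ ≤ b - a + 1 := by
          rw [hbma, har] at htri2
          linarith
        have hc := hC1s _ hs1 hs2
        rw [har]
        linarith
      · -- ς = b
        have hbr : ‖(b : ℂ) - lam‖ = r := by
          rw [norm_sub_rev, hrdef, h]
        have hla2 := norm_sub_le_norm_sub_add_norm_sub ((a:ℂ)) lam ((b:ℂ))
        have hla3 := norm_sub_le_norm_sub_add_norm_sub ((a:ℂ)) ((b:ℂ)) lam
        have hlb : ‖lam - (b:ℂ)‖ = r := by rw [hrdef, h]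
        have hs1 : (b - a) / 2 ≤ ‖(a : ℂ) - lam‖ := by
          rw [hbma', hlb] at hla2
          linarith
        have hs2 : ‖(a : ℂ) - lam‖ ≤ b - a + 1 := by
          rw [hbma', hbr] at hla3
          linarith
        have hc := hC1s _ hs1 hs2
        rw [hbr]
        linarith
    have hrlog : r * |Real.log r| ≤ 1 := by
      have hlneg : Real.log r < 0 := Real.log_neg hr0 hr1
      have habs : |Real.log r| = -Real.log r := abs_of_neg hlneg
      have hinv : (0:ℝ) < r⁻¹ := inv_pos.mpr hr0
      have := Real.log_le_sub_one_of_pos hinv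
      rw [Real.log_inv] at this
      have h6 : -Real.log r ≤ r⁻¹ := by linarith
      calc r * |Real.log r| ≤ r * r⁻¹ := by
            rw [habs]; exact mul_le_mul_of_nonneg_left h6 hr0.le
        _ = 1 := mul_inv_cancel₀ hr0.ne'
    calc ‖ν lam - ν (ς : ℂ)‖ * ‖L lam‖
        ≤ (M * r) * (|Real.log r| + C1 + 2 * Real.pi) := by
          exact mul_le_mul ha1 hLb (norm_nonneg _) (mul_nonneg hMnn hr0.le)
      _ = M * (r * |Real.log r| + r * (C1 + 2 * Real.pi)) := by ring
      _ ≤ M * (1 + 1 * (C1 + 2 * Real.pi)) := by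
          apply mul_le_mul_of_nonneg_left _ hMnn
          apply add_le_add hrlog
          apply mul_le_mul_of_nonneg_right hr1.le (by linarith)
      _ = M * (1 + C1 + 2 * Real.pi) := by ring
  set z := (∫ μ in a..b, (ν μ - ν lam) / ((μ : ℂ) - lam)) + (ν lam - ν (ς : ℂ)) * L lam with hz
  have hzB : ‖z‖ ≤ B := le_trans (norm_add_le _ _) (add_le_add h1 h2)
  have hre : |z.re| ≤ B := le_trans (Complex.abs_re_le_norm z) hzB
  rw [main_eq, Complex.norm_exp]
  rw [abs_le] at hre
  constructor
  · rw [← Real.exp_neg]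
    exact Real.exp_le_exp.mpr hre.1
  · exact Real.exp_le_exp.mpr hre.2
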